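/- Let P : ℂ → ℂ be a polynomial of degree m ≥ 1 whose leading coefficient is nonzero and which is nonvanishing on ℝ, with |P(ξ)| ≥ C'(1+|ξ|)^m for ξ ∈ ℝ for some C' > 0. Then there exists θ > 0 such that P(ζ) ≠ 0 for all ζ in the strip {ζ ∈ ℂ : |Im ζ| < θ}, and there exist constants c, C > 0 with C(1+|ζ|)^m ≥ |P(ζ)| ≥ c(1+|ζ|)^m on this strip. -/

import Mathlib

lemma aux_prod_lower (s : Multiset ℂ) (a : ℝ) (ha : 0 ≤ a)
    (h : ∀ z ∈ s, a ≤ ‖z‖) :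
    a ^ Multiset.card s ≤ (s.map (‖·‖)).prod := by
  induction s using Multiset.induction with
  | empty => simp
  | cons x t ih =>
    have hx : a ≤ ‖x‖ := h x (Multiset.mem_cons_self x t)
    have ht : a ^ Multiset.card t ≤ (t.map (‖·‖)).prod :=
      ih (fun z hz => h z (Multiset.mem_cons_of_mem hz))
    simp only [Multiset.map_cons, Multiset.prod_cons, Multiset.card_cons, pow_succ']
    exact mul_le_mul hx ht (pow_nonneg ha _) (norm_nonneg x)

lemma aux_prod_upper (s : Multiset ℂ) (b : ℝ) (hb : 0 ≤ b)
    (h : ∀ z ∈ s, ‖z‖ ≤ b) :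
    (s.map (‖·‖)).prod ≤ b ^ Multiset.card s := by
  induction s using Multiset.induction with
  | empty => simp
  | cons x t ih =>
    have hx : ‖x‖ ≤ b := h x (Multiset.mem_cons_self x t)
    have ht : (t.map (‖·‖)).prod ≤ b ^ Multiset.card t :=
      ih (fun z hz => h z (Multiset.mem_cons_of_mem hz))
    have hprodnn : 0 ≤ (t.map (‖·‖)).prod := by
      apply Multiset.prod_nonneg
      intro x hx
      obtain ⟨z, _, rfl⟩ := Multiset.mem_map.mp hx
      exact norm_nonneg z
    simp only [Multiset.map_cons, Multiset.prod_cons, Multiset.card_cons, pow_succ']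
    exact mul_le_mul hx ht hprodnn hb

/-- An elliptic polynomial symbol of degree `m` nonvanishing on the real axis
remains nonvanishing and elliptically bounded on a complex strip `{|Im ζ| < θ}`. -/
theorem stmt_12 (P : Polynomial ℂ) (m : ℕ) (hm : 1 ≤ m)
    (hdeg : P.natDegree = m) (hlead : P.leadingCoeff ≠ 0)
    (C' : ℝ) (hC' : 0 < C')
    (hreal : ∀ ξ : ℝ, P.eval (ξ : ℂ) ≠ 0)
    (hlow : ∀ ξ : ℝ, C' * (1 + |ξ|) ^ m ≤ ‖P.eval (ξ : ℂ)‖) :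
    ∃ θ > 0, (∀ ζ : ℂ, |ζ.im| < θ → P.eval ζ ≠ 0) ∧
      ∃ c > 0, ∃ C > 0, ∀ ζ : ℂ, |ζ.im| < θ →
        c * (1 + ‖ζ‖) ^ m ≤ ‖P.eval ζ‖ ∧
          ‖P.eval ζ‖ ≤ C * (1 + ‖ζ‖) ^ m := by
  have hsplits : P.Splits := IsAlgClosed.splits P
  have hcard : Multiset.card P.roots = m := by
    rw [← hdeg]; exact IsAlgClosed.card_roots_eq_natDegree
  have hPeq : ∀ ζ : ℂ, P.eval ζ = P.leadingCoeff * ((P.roots.map fun r => ζ - r)).prod := by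
    intro ζ
    conv_lhs => rw [hsplits.eq_prod_roots]
    simp [Polynomial.eval_multiset_prod, Multiset.map_map, Function.comp]
  have habs : ∀ ζ : ℂ, ‖P.eval ζ‖ =
      ‖P.leadingCoeff‖ * ((P.roots.map fun r => ‖ζ - r‖)).prod := by
    intro ζ
    rw [hPeq ζ, norm_mul, show ‖(P.roots.map fun r => ζ - r).prod‖ = _ from map_multiset_prod (normHom : ℂ →*₀ ℝ) _, Multiset.map_map]
    simp [Function.comp, normHom]
  -- roots have nonzero imaginary part
  have him : ∀ r ∈ P.roots, r.im ≠ 0 := by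
    intro r hr h0
    have hroot : P.eval r = 0 := Polynomial.isRoot_of_mem_roots hr
    have : r = (r.re : ℂ) := by
      apply Complex.ext <;> simp [h0]
    exact hreal r.re (by rw [← this]; exact hroot)
  have hne : P.roots.toFinset.Nonempty := by
    rw [Multiset.toFinset_nonempty]
    intro h
    rw [h] at hcard
    simp at hcard; omega
  set s := P.roots.toFinset with hs
  set θ0 : ℝ := s.inf' hne (fun r => |r.im|) with hθ0
  have hθ0pos : 0 < θ0 := by
    rw [hθ0, Finset.lt_inf'_iff]
    intro r hr
    exact abs_pos.mpr (him r (Multiset.mem_toFinset.mp hr))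
  set R : ℝ := s.sup' hne (fun r => ‖r‖) with hR
  have hRnn : 0 ≤ R := by
    obtain ⟨r0, hr0⟩ := hne
    exact le_trans (norm_nonneg r0) (Finset.le_sup' _ hr0)
  set θ : ℝ := θ0 / 2 with hθdef
  have hθpos : 0 < θ := by positivity
  set δ : ℝ := min (1/2) (θ / (2 + 2 * R)) with hδdef
  have hδpos : 0 < δ := lt_min (by norm_num) (by positivity)
  -- per-factor bounds
  have hfac_low : ∀ ζ : ℂ, |ζ.im| < θ → ∀ r ∈ P.roots,
      δ * (1 + ‖ζ‖) ≤ ‖ζ - r‖ := by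
    intro ζ hζ r hr
    have hrs : r ∈ s := Multiset.mem_toFinset.mpr hr
    have hrim : θ0 ≤ |r.im| := Finset.inf'_le _ hrs
    have hrabs : ‖r‖ ≤ R := Finset.le_sup' _ hrs
    have h1 : θ ≤ ‖ζ - r‖ := by
      have h2 : |(ζ - r).im| ≤ ‖ζ - r‖ := Complex.abs_im_le_norm _
      have h3 : (ζ - r).im = ζ.im - r.im := by simp
      have h4 : |r.im| - |ζ.im| ≤ |ζ.im - r.im| := by
        have := abs_sub_abs_le_abs_sub r.im ζ.im
        rw [abs_sub_comm] at this
        linarith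
      rw [h3] at h2
      linarith
    have h2 : ‖ζ‖ - R ≤ ‖ζ - r‖ := by
      have := norm_sub_norm_le ζ r
      linarith
    have habsζ : 0 ≤ ‖ζ‖ := norm_nonneg ζ
    rcases le_or_gt (2 * R + 1) (‖ζ‖) with hcase | hcase
    · have hδhalf : δ ≤ 1/2 := min_le_left _ _
      nlinarith
    · have hδθ : δ ≤ θ / (2 + 2 * R) := min_le_right _ _
      have hden : (0:ℝ) < 2 + 2 * R := by linarith
      have : δ * (1 + ‖ζ‖) ≤ (θ / (2 + 2 * R)) * (2 + 2 * R) := by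
        apply mul_le_mul hδθ (by linarith) (by linarith) (by positivity)
      rw [div_mul_cancel₀ _ (ne_of_gt hden)] at this
      linarith
  have hfac_up : ∀ ζ : ℂ, ∀ r ∈ P.roots,
      ‖ζ - r‖ ≤ (1 + R) * (1 + ‖ζ‖) := by
    intro ζ r hr
    have hrabs : ‖r‖ ≤ R := Finset.le_sup' _ (Multiset.mem_toFinset.mpr hr)
    have := norm_sub_le ζ r
    have habsζ : 0 ≤ ‖ζ‖ := norm_nonneg ζ
    nlinarith
  have hleadpos : 0 < ‖P.leadingCoeff‖ := norm_pos_iff.mpr hlead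
  refine ⟨θ, hθpos, ?_, ‖P.leadingCoeff‖ * δ ^ m, by positivity,
    ‖P.leadingCoeff‖ * (1 + R) ^ m, by positivity, ?_⟩
  · intro ζ hζ h0
    have hb : (δ * (1 + ‖ζ‖)) ^ m ≤ ((P.roots.map fun r => ζ - r).map (‖·‖)).prod := by
      have := aux_prod_lower (P.roots.map fun r => ζ - r) (δ * (1 + ‖ζ‖))
        (by positivity) ?_
      · rwa [Multiset.card_map, hcard] at this
      · intro z hz
        obtain ⟨r, hr, rfl⟩ := Multiset.mem_map.mp hz
        exact hfac_low ζ hζ r hr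
    rw [Multiset.map_map] at hb
    have : ‖P.eval ζ‖ > 0 := by
      rw [habs ζ]
      have : (0:ℝ) < (δ * (1 + ‖ζ‖)) ^ m := by positivity
      calc (0:ℝ) < ‖P.leadingCoeff‖ * (δ * (1 + ‖ζ‖)) ^ m := by positivity
        _ ≤ _ := by
            apply mul_le_mul_of_nonneg_left _ (le_of_lt hleadpos)
            simpa [Function.comp] using hb
    rw [h0] at this
    simp at this
  · intro ζ hζ
    constructor
    · have hb : (δ * (1 + ‖ζ‖)) ^ m ≤ ((P.roots.map fun r => ζ - r).map (‖·‖)).prod := by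
        have := aux_prod_lower (P.roots.map fun r => ζ - r) (δ * (1 + ‖ζ‖))
          (by positivity) ?_
        · rwa [Multiset.card_map, hcard] at this
        · intro z hz
          obtain ⟨r, hr, rfl⟩ := Multiset.mem_map.mp hz
          exact hfac_low ζ hζ r hr
      rw [Multiset.map_map] at hb
      rw [habs ζ]
      calc ‖P.leadingCoeff‖ * δ ^ m * (1 + ‖ζ‖) ^ m
          = ‖P.leadingCoeff‖ * (δ ^ m * (1 + ‖ζ‖) ^ m) := by ring
        _ ≤ ‖P.leadingCoeff‖ * ((P.roots.map fun r => ‖ζ - r‖)).prod := by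
            apply mul_le_mul_of_nonneg_left _ (le_of_lt hleadpos)
            rw [← mul_pow]
            simpa [Function.comp] using hb
    · have hb : ((P.roots.map fun r => ζ - r).map (‖·‖)).prod ≤ ((1 + R) * (1 + ‖ζ‖)) ^ m := by
        have := aux_prod_upper (P.roots.map fun r => ζ - r) ((1 + R) * (1 + ‖ζ‖))
          (by positivity) ?_
        · rwa [Multiset.card_map, hcard] at this
        · intro z hz
          obtain ⟨r, hr, rfl⟩ := Multiset.mem_map.mp hz
          exact hfac_up ζ r hr
      rw [Multiset.map_map] at hb
      rw [habs ζ]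
      calc ‖P.leadingCoeff‖ * ((P.roots.map fun r => ‖ζ - r‖)).prod
          ≤ ‖P.leadingCoeff‖ * ((1 + R) ^ m * (1 + ‖ζ‖) ^ m) := by
            apply mul_le_mul_of_nonneg_left _ (le_of_lt hleadpos)
            rw [← mul_pow]
            simpa [Function.comp] using hb
        _ = ‖P.leadingCoeff‖ * (1 + R) ^ m * (1 + ‖ζ‖) ^ m := by ring
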